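/- For p ∈ (0,1) with p ≠ 1/2, let q̂ = (p - √(p(1-p)))/(2p-1). Then q̂ ∈ (0,1) and the function z(q) = (q² - 2pq + p)/(q(1-q)) on (0,1) attains its minimum at q̂, with minimum value z(q̂) = 2√(p(1-p)). -/

import Mathlib

theorem line_optimal_trust (p : ℝ) (hp : p ∈ Set.Ioo (0:ℝ) 1) (hp2 : p ≠ 1/2) :
    let z : ℝ → ℝ := fun q => (q^2 - 2*p*q + p) / (q * (1 - q))
    let qhat : ℝ := (p - Real.sqrt (p * (1 - p))) / (2*p - 1)
    qhat ∈ Set.Ioo (0:ℝ) 1 ∧ (∀ q ∈ Set.Ioo (0:ℝ) 1, z qhat ≤ z q) ∧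
      z qhat = 2 * Real.sqrt (p * (1 - p)) := by
  obtain ⟨hp0, hp1⟩ := hp
  intro z qhat
  set s : ℝ := Real.sqrt (p * (1 - p)) with hs
  have hs2 : s ^ 2 = p * (1 - p) := by
    rw [hs, sq, Real.mul_self_sqrt (by nlinarith)]
  have hspos : 0 < s := Real.sqrt_pos.mpr (by nlinarith)
  have hne : 2 * p - 1 ≠ 0 := by
    intro h; apply hp2; linarith
  have hden : (1 : ℝ) + 2 * s ≠ 0 := by positivity
  have hq : qhat = (p + s) / (1 + 2 * s) := by
    show (p - s) / (2 * p - 1) = (p + s) / (1 + 2 * s)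
    rw [div_eq_div_iff hne hden]
    nlinarith [hs2]
  have hq0 : 0 < qhat := by rw [hq]; positivity
  have hq1 : qhat < 1 := by
    rw [hq, div_lt_one (by positivity)]; nlinarith
  have hkey : (p + s) ^ 2 = p * (1 + 2 * s) := by nlinarith [hs2]
  have hzhat : z qhat = 2 * s := by
    show (qhat ^ 2 - 2 * p * qhat + p) / (qhat * (1 - qhat)) = 2 * s
    rw [hq]
    rw [div_eq_iff (by
      have : (p + s) / (1 + 2 * s) * (1 - (p + s) / (1 + 2 * s)) > 0 := by
        have := hq0; have := hq1; rw [hq] at *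
        nlinarith [this]
      exact ne_of_gt this)]
    field_simp
    linear_combination (-(1+2*s)) * hs2
  refine ⟨⟨hq0, hq1⟩, ?_, hzhat⟩
  intro q ⟨h0, h1⟩
  rw [hzhat]
  show 2 * s ≤ (q ^ 2 - 2 * p * q + p) / (q * (1 - q))
  rw [le_div_iff₀ (by nlinarith)]
  nlinarith [sq_nonneg ((1 + 2 * s) * q - (p + s)), hspos, mul_pos h0 (by linarith : (0:ℝ) < 1 - q)]
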